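/- Let ε, r > 0, e₁ = (1,0,0) ∈ ℝ³, and define (c_n) by c₀ = r+ε, c_{n+1} = r+ε − r²/(r+ε+c_n); let ρ₀ := 1, ρ_m := r/(c₀+c_{m−1}) for m ≥ 1, q_n := ∏_{m=0}^n ρ_m, and Q := Σ_{n=0}^∞ q_n (assumed finite). Then for every x ∈ ℝ³ with |x + (r+ε)e₁| = r, Σ_{n=0}^∞ q_n·(1/|x − c_n e₁| − 1/|x + c_n e₁|) = −1/r. Consequently, the function h₀(x) = −(1/(4πQ))·Σ_{n=0}^∞ q_n·(1/|x − c_n e₁| − 1/|x + c_n e₁|) is identically equal to the constant C₂ = 1/(4πrQ) on the sphere ∂B₂ = {x : |x + (r+ε)e₁| = r}, and by the odd symmetry h₀(−x₁,x₂,x₃) = −h₀(x₁,x₂,x₃) it equals C₁ = −1/(4πrQ) on ∂B₁ = {x : |x − (r+ε)e₁| = r}. -/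

import Mathlib

open Real

set_option maxHeartbeats 1000000 in
theorem stmt_17 (ε r : ℝ) (hε : 0 < ε) (hr : 0 < r)
    (e₁ : EuclideanSpace ℝ (Fin 3)) (he₁ : e₁ = EuclideanSpace.single 0 1)
    (c : ℕ → ℝ) (hc0 : c 0 = r + ε)
    (hcrec : ∀ n, c (n + 1) = r + ε - r ^ 2 / (r + ε + c n))
    (ρ : ℕ → ℝ) (hρ0 : ρ 0 = 1)
    (hρ : ∀ m, 1 ≤ m → ρ m = r / (c 0 + c (m - 1)))
    (q : ℕ → ℝ) (hq : ∀ n, q n = ∏ m ∈ Finset.range (n + 1), ρ m)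
    (hsum : Summable q)
    (Q : ℝ) (hQ : Q = ∑' n, q n)
    (h₀ : EuclideanSpace ℝ (Fin 3) → ℝ)
    (hh₀ : ∀ x, h₀ x = -(1 / (4 * Real.pi * Q)) *
        ∑' n, q n * (1 / ‖x - c n • e₁‖ - 1 / ‖x + c n • e₁‖)) :
    (∀ x : EuclideanSpace ℝ (Fin 3), ‖x + (r + ε) • e₁‖ = r →
      (∑' n, q n * (1 / ‖x - c n • e₁‖ - 1 / ‖x + c n • e₁‖)) = -(1 / r) ∧
      h₀ x = 1 / (4 * Real.pi * r * Q)) ∧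
    (∀ x : EuclideanSpace ℝ (Fin 3), h₀ (x - (2 * x 0) • e₁) = -h₀ x) ∧
    (∀ x : EuclideanSpace ℝ (Fin 3), ‖x - (r + ε) • e₁‖ = r →
      h₀ x = -(1 / (4 * Real.pi * r * Q))) := by
  have hπ : (0:ℝ) < Real.pi := Real.pi_pos
  obtain ⟨a, ha⟩ : ∃ a : ℝ, r + ε = a := ⟨_, rfl⟩
  rw [ha] at hc0
  simp only [ha] at hcrec
  rw [ha]
  have ha0 : 0 < a := by rw [← ha]; positivity
  have har : r < a := by rw [← ha]; linarith
  have hars : 0 < a ^ 2 - r ^ 2 := by nlinarith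
  obtain ⟨s, hs0, hssq⟩ : ∃ s : ℝ, 0 < s ∧ s ^ 2 = a ^ 2 - r ^ 2 :=
    ⟨Real.sqrt (a ^ 2 - r ^ 2), Real.sqrt_pos.2 hars, Real.sq_sqrt hars.le⟩
  have hsa : s < a := by nlinarith
  -- bounds on c
  have hcb : ∀ n, s ≤ c n ∧ c n ≤ a := by
    intro n
    induction n with
    | zero => rw [hc0]; exact ⟨hsa.le, le_refl _⟩
    | succ n ih =>
      obtain ⟨h1, h2⟩ := ih
      have hd : 0 < a + c n := by linarith
      rw [hcrec]
      constructor
      · have h3 : r ^ 2 / (a + c n) ≤ a - s := by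
          rw [div_le_iff₀ hd]; nlinarith
        linarith
      · have : 0 < r ^ 2 / (a + c n) := by positivity
        linarith
  have hδ : 0 < s - ε := by nlinarith [ha]
  -- positivity of q
  have hρpos : ∀ m, 0 < ρ m := by
    intro m
    match m with
    | 0 => rw [hρ0]; norm_num
    | (m + 1) =>
      rw [hρ (m + 1) (by omega)]
      simp only [Nat.add_sub_cancel]
      have := (hcb m).1
      rw [hc0]
      exact div_pos hr (by linarith)
  have hqpos : ∀ n, 0 < q n := fun n => by
    rw [hq]; exact Finset.prod_pos (fun m _ => hρpos m)
  have hq0 : q 0 = 1 := by rw [hq]; simp [hρ0]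
  have hqrec : ∀ n, q (n + 1) = q n * (r / (a + c n)) := by
    intro n
    rw [hq (n + 1), hq n, Finset.prod_range_succ]
    congr 1
    rw [hρ (n + 1) (by omega)]
    simp only [Nat.add_sub_cancel]
    rw [hc0]
  have he₁norm : ‖e₁‖ = 1 := by rw [he₁]; simp
  -- norm expansions
  have hexp_sub : ∀ (x : EuclideanSpace ℝ (Fin 3)) (t : ℝ),
      ‖x - t • e₁‖ ^ 2 = ‖x‖ ^ 2 - 2 * t * (inner ℝ x e₁ : ℝ) + t ^ 2 := by
    intro x t
    rw [norm_sub_sq_real, real_inner_smul_right, norm_smul, he₁norm, Real.norm_eq_abs,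
      mul_one, sq_abs]
    ring
  have hexp_add : ∀ (x : EuclideanSpace ℝ (Fin 3)) (t : ℝ),
      ‖x + t • e₁‖ ^ 2 = ‖x‖ ^ 2 + 2 * t * (inner ℝ x e₁ : ℝ) + t ^ 2 := by
    intro x t
    rw [norm_add_sq_real, real_inner_smul_right, norm_smul, he₁norm, Real.norm_eq_abs,
      mul_one, sq_abs]
    ring
  -- symmetry of norms under reflection
  have hnormsym : ∀ (x : EuclideanSpace ℝ (Fin 3)) (t : ℝ),
      ‖(x - (2 * x 0) • e₁) + t • e₁‖ = ‖x - t • e₁‖ := by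
    intro x t
    rw [he₁, EuclideanSpace.norm_eq, EuclideanSpace.norm_eq]
    congr 1
    apply Finset.sum_congr rfl
    intro i _
    fin_cases i <;>
      simp [EuclideanSpace.single_apply, PiLp.sub_apply, PiLp.add_apply, PiLp.smul_apply,
        smul_eq_mul, Real.norm_eq_abs, sq_abs] <;> ring
  -- the key computation
  have key : ∀ x : EuclideanSpace ℝ (Fin 3), ‖x + a • e₁‖ = r →
      (∑' n, q n * (1 / ‖x - c n • e₁‖ - 1 / ‖x + c n • e₁‖)) = -(1 / r) := by
    intro x hx
    have hBlow : ∀ n, s - ε ≤ ‖x + c n • e₁‖ := by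
      intro n
      have heq : x + c n • e₁ = (x + a • e₁) - (a - c n) • e₁ := by module
      rw [heq]
      have h1 := norm_sub_norm_le (x + a • e₁) ((a - c n) • e₁)
      rw [hx, norm_smul, he₁norm, Real.norm_eq_abs, mul_one,
        abs_of_nonneg (by linarith [(hcb n).2] : (0:ℝ) ≤ a - c n)] at h1
      have h2 := (hcb n).1
      linarith [ha]
    have hAlow : ∀ n, s - ε ≤ ‖x - c n • e₁‖ := by
      intro n
      have heq : x - c n • e₁ = (x + a • e₁) - (a + c n) • e₁ := by module
      rw [heq]
      have h1 := norm_sub_norm_le ((a + c n) • e₁) (x + a • e₁)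
      rw [norm_sub_rev, hx, norm_smul, he₁norm, Real.norm_eq_abs, mul_one,
        abs_of_nonneg (by linarith [(hcb n).1, hs0] : (0:ℝ) ≤ a + c n)] at h1
      have h2 := (hcb n).1
      linarith [ha]
    have hBpos : ∀ n, 0 < ‖x + c n • e₁‖ := fun n => lt_of_lt_of_le hδ (hBlow n)
    have hApos : ∀ n, 0 < ‖x - c n • e₁‖ := fun n => lt_of_lt_of_le hδ (hAlow n)
    have hxn : ‖x‖ ^ 2 = r ^ 2 - 2 * a * (inner ℝ x e₁ : ℝ) - a ^ 2 := by
      have h1 : ‖x + a • e₁‖ ^ 2 = r ^ 2 := by rw [hx]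
      rw [hexp_add] at h1
      linarith
    have hkelvin : ∀ n, ‖x - c n • e₁‖ = ((a + c n) / r) * ‖x + c (n + 1) • e₁‖ := by
      intro n
      have hd : 0 < a + c n := by linarith [(hcb n).1, hs0]
      have hc1 : c (n + 1) = a - r ^ 2 / (a + c n) := hcrec n
      have hsq : ‖x - c n • e₁‖ ^ 2 = (((a + c n) / r) * ‖x + c (n + 1) • e₁‖) ^ 2 := by
        rw [mul_pow, hexp_sub, hexp_add, hxn, hc1]
        field_simp
        ring
      calc ‖x - c n • e₁‖ = Real.sqrt (‖x - c n • e₁‖ ^ 2) :=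
            (Real.sqrt_sq (norm_nonneg _)).symm
        _ = Real.sqrt ((((a + c n) / r) * ‖x + c (n + 1) • e₁‖) ^ 2) := by rw [hsq]
        _ = ((a + c n) / r) * ‖x + c (n + 1) • e₁‖ := Real.sqrt_sq (by positivity)
    have hterm : ∀ n, q n * (1 / ‖x - c n • e₁‖ - 1 / ‖x + c n • e₁‖) =
        (q (n + 1) / ‖x + c (n + 1) • e₁‖) - (q n / ‖x + c n • e₁‖) := by
      intro n
      have hd : 0 < a + c n := by linarith [(hcb n).1, hs0]
      rw [hqrec n, hkelvin n]
      have h1 := (hBpos (n + 1)).ne'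
      have h2 := (hBpos n).ne'
      field_simp
    have hsummable : Summable (fun n => q n * (1 / ‖x - c n • e₁‖ - 1 / ‖x + c n • e₁‖)) := by
      rw [← summable_abs_iff]
      refine Summable.of_nonneg_of_le (fun n => abs_nonneg _) (fun n => ?_)
        (hsum.mul_right (2 / (s - ε)))
      · 
        rw [abs_mul, abs_of_pos (hqpos n)]
        apply mul_le_mul_of_nonneg_left _ (hqpos n).le
        have hA := hAlow n
        have hB := hBlow n
        have h1 : |1 / ‖x - c n • e₁‖ - 1 / ‖x + c n • e₁‖| ≤
            1 / ‖x - c n • e₁‖ + 1 / ‖x + c n • e₁‖ := by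
          refine (abs_sub _ _).trans ?_
          rw [abs_of_nonneg (by positivity), abs_of_nonneg (by positivity)]
        have h2 : 1 / ‖x - c n • e₁‖ ≤ 1 / (s - ε) := one_div_le_one_div_of_le hδ hA
        have h3 : 1 / ‖x + c n • e₁‖ ≤ 1 / (s - ε) := one_div_le_one_div_of_le hδ hB
        calc |1 / ‖x - c n • e₁‖ - 1 / ‖x + c n • e₁‖| ≤ _ := h1
          _ ≤ 1 / (s - ε) + 1 / (s - ε) := by linarith
          _ = 2 / (s - ε) := by ring
    have hS := hsummable.hasSum
    have hpartial : ∀ N, ∑ i ∈ Finset.range N,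
        q i * (1 / ‖x - c i • e₁‖ - 1 / ‖x + c i • e₁‖) =
        q N / ‖x + c N • e₁‖ - q 0 / ‖x + c 0 • e₁‖ := by
      intro N
      rw [Finset.sum_congr rfl (fun i _ => hterm i)]
      exact Finset.sum_range_sub (fun n => q n / ‖x + c n • e₁‖) N
    have hg0 : q 0 / ‖x + c 0 • e₁‖ = 1 / r := by
      rw [hq0, hc0, hx]
    have hgtend : Filter.Tendsto (fun N => q N / ‖x + c N • e₁‖) Filter.atTop (nhds 0) := by
      have h1 : Filter.Tendsto (fun N => q N * (1 / (s - ε))) Filter.atTop (nhds 0) := by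
        have := hsum.tendsto_atTop_zero.mul_const (1 / (s - ε))
        simpa using this
      apply squeeze_zero (fun n => div_nonneg (hqpos n).le (norm_nonneg _)) _ h1
      intro n
      rw [div_eq_mul_one_div]
      exact mul_le_mul_of_nonneg_left (one_div_le_one_div_of_le hδ (hBlow n)) (hqpos n).le
    have htend2 : Filter.Tendsto (fun N => ∑ i ∈ Finset.range N,
        q i * (1 / ‖x - c i • e₁‖ - 1 / ‖x + c i • e₁‖)) Filter.atTop (nhds (-(1 / r))) := by
      simp only [hpartial]
      rw [hg0, show -(1 / r) = 0 - 1 / r by ring]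
      exact hgtend.sub_const _
    exact tendsto_nhds_unique hS.tendsto_sum_nat htend2
  have hQpos : 0 < Q := by
    rw [hQ]
    exact Summable.tsum_pos hsum (fun n => (hqpos n).le) 0 (hqpos 0)
  -- part 1
  have part1 : ∀ x : EuclideanSpace ℝ (Fin 3), ‖x + a • e₁‖ = r →
      (∑' n, q n * (1 / ‖x - c n • e₁‖ - 1 / ‖x + c n • e₁‖)) = -(1 / r) ∧
      h₀ x = 1 / (4 * Real.pi * r * Q) := by
    intro x hx
    have h1 := key x hx
    refine ⟨h1, ?_⟩
    rw [hh₀, h1]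
    rw [neg_mul_neg, div_mul_div_comm, one_mul]
    ring_nf
  -- part 2
  have hodd : ∀ x : EuclideanSpace ℝ (Fin 3), h₀ (x - (2 * x 0) • e₁) = -h₀ x := by
    intro x
    rw [hh₀, hh₀]
    have hcongr : ∀ n : ℕ, q n * (1 / ‖(x - (2 * x 0) • e₁) - c n • e₁‖ -
        1 / ‖(x - (2 * x 0) • e₁) + c n • e₁‖) =
        -(q n * (1 / ‖x - c n • e₁‖ - 1 / ‖x + c n • e₁‖)) := by
      intro n
      have h1 : ‖(x - (2 * x 0) • e₁) + c n • e₁‖ = ‖x - c n • e₁‖ := hnormsym x (c n)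
      have h2 : ‖(x - (2 * x 0) • e₁) - c n • e₁‖ = ‖x + c n • e₁‖ := by
        have h3 := hnormsym x (-(c n))
        rw [neg_smul, sub_neg_eq_add, ← sub_eq_add_neg] at h3
        exact h3
      rw [h1, h2]
      ring
    rw [tsum_congr hcongr, tsum_neg]
    ring
  refine ⟨part1, hodd, ?_⟩
  -- part 3
  intro x hx
  have hy : ‖(x - (2 * x 0) • e₁) + a • e₁‖ = r := by
    rw [hnormsym x a]
    exact hx
  have h1 := (part1 (x - (2 * x 0) • e₁) hy).2
  have h2 := hodd x
  rw [h1] at h2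
  linarith
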